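/- arXiv:math/0211442 — 3 statements merged into one kernel-verified Lean document; each statement's English description precedes it below -/
import Mathlib

section
/- Let n ≥ 1 and p ≥ 1. The number of columns of type B and height p over the alphabet 𝔅_n equals Σ_{k=0}^{⌊p/2⌋} binom(2n+1, p−2k). -/
/-- The alphabet `𝔅_n = {1 ≺ ⋯ ≺ n ≺ 0 ≺ n̄ ≺ ⋯ ≺ 1̄}` with `2n+1` letters, encoded as
`Fin (2n+1)` with its natural order: the letter `j` (for `1 ≤ j ≤ n`) is `j−1`, the letter
`0` is `n`, and the barred letter `j̄` is `2n+1−j`. -/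
abbrev BLetter (n : ℕ) := Fin (2 * n + 1)

/-- A column of type `B` and height `p`: a weakly increasing `p`-tuple of letters of `𝔅_n`
in which only the letter `0` (encoded as `n`) may be repeated (repetitions in a weakly
increasing tuple are detected on adjacent entries). -/
def IsColumnB (n p : ℕ) (C : Fin p → BLetter n) : Prop :=
  Monotone C ∧ ∀ (j : ℕ) (h : j + 1 < p),
    C ⟨j, by omega⟩ = C ⟨j + 1, h⟩ → (C ⟨j, by omega⟩ : ℕ) = n

namespace CardColB

variable {n p : ℕ}

/-- the zero letter -/
def zlet (n : ℕ) : BLetter n := ⟨n, by omega⟩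

lemma col_eq_z {C : Fin p → BLetter n} (hC : IsColumnB n p C) {i j : Fin p}
    (hij : i < j) (h : C i = C j) : C i = zlet n := by
  have h1 : (i : ℕ) + 1 < p := by omega
  have hi1 : i ≤ (⟨(i : ℕ) + 1, h1⟩ : Fin p) := by
    simp [Fin.le_def]
  have hij1 : (⟨(i : ℕ) + 1, h1⟩ : Fin p) ≤ j := by
    simp [Fin.le_def]; omega
  have heq : C ⟨(i : ℕ), by omega⟩ = C ⟨(i : ℕ) + 1, h1⟩ := by
    have hii : (⟨(i : ℕ), by omega⟩ : Fin p) = i := by simp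
    rw [hii]
    exact le_antisymm (hC.1 hi1) (h ▸ hC.1 hij1)
  have := hC.2 i h1 heq
  simp at this
  exact Fin.ext this

/-- The multiset of values of a tuple. -/
def colMS (C : Fin p → BLetter n) : Multiset (BLetter n) := (List.ofFn C : Multiset (BLetter n))

lemma colMS_eq_map (C : Fin p → BLetter n) :
    colMS C = Multiset.map C (Finset.univ.val) := by
  rw [colMS, List.ofFn_eq_map, Fin.univ_def]
  rfl

lemma card_colMS (C : Fin p → BLetter n) : Multiset.card (colMS C) = p := by
  simp [colMS]

lemma count_le_one {C : Fin p → BLetter n} (hC : IsColumnB n p C) {x : BLetter n}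
    (hx : x ≠ zlet n) : Multiset.count x (colMS C) ≤ 1 := by
  rw [colMS_eq_map, Multiset.count_map]
  have : Multiset.filter (fun a => x = C a) Finset.univ.val
      = (Finset.filter (fun a => x = C a) Finset.univ).val := rfl
  rw [this]
  have : (Finset.filter (fun a => x = C a) Finset.univ).card ≤ 1 := by
    apply Finset.card_le_one.2
    intro a ha b hb
    simp at ha hb
    by_contra hab
    rcases lt_or_gt_of_ne hab with h | h
    · exact hx (ha ▸ col_eq_z hC h (ha ▸ hb ▸ rfl))
    · exact hx (hb ▸ col_eq_z hC h (hb ▸ ha ▸ rfl))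
  exact this

/-- the set of non-zero values of a column -/
def colT (C : Fin p → BLetter n) : Finset (BLetter n) :=
  (Finset.image C Finset.univ).erase (zlet n)

lemma colT_card_le (C : Fin p → BLetter n) : (colT C).card ≤ p := by
  calc (colT C).card ≤ (Finset.image C Finset.univ).card :=
        Finset.card_le_card (Finset.erase_subset _ _)
    _ ≤ (Finset.univ : Finset (Fin p)).card := Finset.card_image_le
    _ = p := by simp

lemma mem_colMS {C : Fin p → BLetter n} {x : BLetter n} :
    x ∈ colMS C ↔ ∃ i, C i = x := by
  simp [colMS, List.mem_ofFn]

lemma filter_ne_z {C : Fin p → BLetter n} (hC : IsColumnB n p C) :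
    Multiset.filter (fun x => ¬ x = zlet n) (colMS C) = (colT C).val := by
  rw [Multiset.Nodup.ext _ (colT C).nodup]
  · intro a
    simp only [Multiset.mem_filter, mem_colMS, colT, ← Finset.mem_def, Finset.mem_erase,
      Finset.mem_image, Finset.mem_univ, true_and]
    tauto
  · rw [Multiset.nodup_iff_count_le_one]
    intro a
    rw [Multiset.count_filter]
    split
    · next h => exact count_le_one hC h
    · omega

lemma colMS_decomp {C : Fin p → BLetter n} (hC : IsColumnB n p C) :
    colMS C = Multiset.replicate (p - (colT C).card) (zlet n) + (colT C).val := by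
  have h1 := Multiset.filter_add_not (fun x => x = zlet n) (colMS C)
  rw [Multiset.filter_eq', filter_ne_z hC] at h1
  have h2 := congrArg Multiset.card h1
  simp [card_colMS] at h2
  have hcount : Multiset.count (zlet n) (colMS C) = p - (colT C).card := by omega
  rw [hcount] at h1
  exact h1.symm

lemma col_inj {C₁ C₂ : Fin p → BLetter n} (h1 : IsColumnB n p C₁) (h2 : IsColumnB n p C₂)
    (h : colT C₁ = colT C₂) : C₁ = C₂ := by
  have hms : colMS C₁ = colMS C₂ := by
    rw [colMS_decomp h1, colMS_decomp h2, h]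
  have hperm : (List.ofFn C₁).Perm (List.ofFn C₂) := Multiset.coe_eq_coe.1 hms
  have heq : List.ofFn C₁ = List.ofFn C₂ :=
    hperm.eq_of_sortedLE (List.sortedLE_ofFn_iff.2 h1.1)
      (List.sortedLE_ofFn_iff.2 h2.1)
  funext i
  have e1 : C₁ i = (List.ofFn C₁)[(i : ℕ)]'(by simp) := by simp
  have e2 : C₂ i = (List.ofFn C₂)[(i : ℕ)]'(by simp) := by simp
  rw [e1, e2]
  simp only [heq]

section FromFinset

variable (S : Finset (BLetter n))

/-- The multiset consisting of `S` and `p - |S|` zeros. -/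
def bigMS (p : ℕ) : Multiset (BLetter n) :=
  Multiset.replicate (p - S.card) (zlet n) + S.val

def bigL (p : ℕ) : List (BLetter n) := Multiset.sort (bigMS S p) (· ≤ ·)

lemma bigL_length (hcard : S.card ≤ p) : (bigL S p).length = p := by
  simp [bigL, bigMS, Multiset.length_sort]
  omega

lemma bigL_sorted : List.Pairwise (· ≤ ·) (bigL S p) := Multiset.pairwise_sort _ _

lemma bigL_coe : (bigL S p : Multiset (BLetter n)) = bigMS S p := Multiset.sort_eq _ _

/-- the column built from a finset -/
def toCol (hcard : S.card ≤ p) : Fin p → BLetter n :=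
  fun i => (bigL S p).get ⟨i, by rw [bigL_length S hcard]; exact i.2⟩

lemma toCol_isColumn (hz : zlet n ∉ S) (hcard : S.card ≤ p) :
    IsColumnB n p (toCol S hcard) := by
  constructor
  · intro a b hab
    exact (bigL_sorted S (p := p)).sortedLE.monotone_get (show (⟨a, _⟩ : Fin _) ≤ ⟨b, _⟩ from hab)
  · intro j h heq
    by_contra hne
    set x : BLetter n := toCol S hcard ⟨j, by omega⟩ with hx
    have hxz : x ≠ zlet n := fun hc => hne (by rw [hx] at hc ⊢; rw [hc]; rfl)
    -- count of x in bigMS is ≤ 1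
    have hle : Multiset.count x (bigMS S p) ≤ 1 := by
      rw [bigMS, Multiset.count_add, Multiset.count_replicate,
        if_neg (fun hc => hxz hc.symm)]
      have := Multiset.nodup_iff_count_le_one.1 S.nodup x
      omega
    -- but it occurs at positions j and j+1 in bigL
    have hL := bigL_length S hcard
    have hj1 : j + 1 < (bigL S p).length := by omega
    have hj : j < (bigL S p).length := by omega
    have hgj : (bigL S p)[j] = x := rfl
    have hgj1 : (bigL S p)[j+1] = x := by
      have : toCol S hcard ⟨j+1, h⟩ = (bigL S p)[j+1] := rfl
      rw [← this, ← heq]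
    have hdrop : List.drop j (bigL S p) = x :: x :: List.drop (j+2) (bigL S p) := by
      rw [List.drop_eq_getElem_cons hj, hgj, List.drop_eq_getElem_cons hj1, hgj1]
    have hcnt2 : 2 ≤ List.count x (List.drop j (bigL S p)) := by
      rw [hdrop, List.count_cons_self, List.count_cons_self]
      omega
    have hsub : List.count x (List.drop j (bigL S p)) ≤ List.count x (bigL S p) :=
      (List.drop_sublist j _).count_le x
    have : List.count x (bigL S p) = Multiset.count x (bigMS S p) := by
      rw [← bigL_coe S (p := p), Multiset.coe_count]
    omega

lemma toCol_roundtrip (hz : zlet n ∉ S) (hcard : S.card ≤ p) (hp : 1 ≤ p) :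
    colT (toCol S hcard) = S := by
  ext x
  simp only [colT, Finset.mem_erase, Finset.mem_image, Finset.mem_univ, true_and]
  constructor
  · rintro ⟨hxz, i, hi⟩
    have hmem : x ∈ bigL S p := by
      rw [← hi]
      exact List.get_mem _ _
    have : x ∈ bigMS S p := by rw [← bigL_coe S (p := p)]; exact hmem
    rw [bigMS, Multiset.mem_add, Multiset.mem_replicate] at this
    rcases this with h | h
    · exact absurd h.2 hxz
    · exact h
  · intro hx
    refine ⟨fun hc => hz (hc ▸ hx), ?_⟩
    have hmem : x ∈ bigL S p := by
      rw [← Multiset.mem_coe, bigL_coe S (p := p), bigMS, Multiset.mem_add]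
      right; exact hx
    rw [List.mem_iff_getElem] at hmem
    obtain ⟨i, hilt, hi⟩ := hmem
    exact ⟨⟨i, by rwa [bigL_length S hcard] at hilt⟩, hi⟩

end FromFinset

lemma sum_choose_aux (M : ℕ) (p : ℕ) :
    ∑ k ∈ Finset.range (p / 2 + 1), Nat.choose (M + 1) (p - 2 * k)
      = ∑ j ∈ Finset.range (p + 1), Nat.choose M j := by
  induction p using Nat.twoStepInduction with
  | zero => simp
  | one => simp [Finset.sum_range_succ]; omega
  | more q ih _ =>
    have h2 : (q + 2) / 2 + 1 = q / 2 + 1 + 1 := by omega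
    rw [h2, Finset.sum_range_succ']
    have hcongr : ∑ k ∈ Finset.range (q / 2 + 1), Nat.choose (M + 1) (q + 2 - 2 * (k + 1))
        = ∑ k ∈ Finset.range (q / 2 + 1), Nat.choose (M + 1) (q - 2 * k) := by
      apply Finset.sum_congr rfl
      intro k _
      congr 1
      omega
    rw [hcongr, ih]
    have hpas : Nat.choose (M + 1) (q + 2 - 2 * 0) = Nat.choose M (q + 1) + Nat.choose M (q + 2) := by
      have : q + 2 - 2 * 0 = (q + 1) + 1 := by omega
      rw [this, Nat.choose_succ_succ]
    rw [hpas, Finset.sum_range_succ (f := fun j => Nat.choose M j) (n := q + 2),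
      Finset.sum_range_succ (f := fun j => Nat.choose M j) (n := q + 1)]
    omega

lemma card_finsets (n p : ℕ) :
    Nat.card {S : Finset (BLetter n) // zlet n ∉ S ∧ S.card ≤ p}
      = ∑ j ∈ Finset.range (p + 1), Nat.choose (2 * n) j := by
  rw [Nat.card_eq_fintype_card, Fintype.card_subtype]
  have hset : (Finset.univ.filter fun S : Finset (BLetter n) => zlet n ∉ S ∧ S.card ≤ p)
      = (Finset.range (p + 1)).biUnion
          (fun j => (Finset.univ.erase (zlet n)).powersetCard j) := by
    ext S
    simp only [Finset.mem_filter, Finset.mem_univ, true_and, Finset.mem_biUnion,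
      Finset.mem_range, Finset.mem_powersetCard, Finset.subset_erase, Finset.subset_univ,
      true_and]
    constructor
    · rintro ⟨hz, hc⟩
      exact ⟨S.card, by omega, hz, rfl⟩
    · rintro ⟨j, hj, hz, hc⟩
      exact ⟨hz, by omega⟩
  rw [hset, Finset.card_biUnion]
  · apply Finset.sum_congr rfl
    intro j _
    rw [Finset.card_powersetCard, Finset.card_erase_of_mem (Finset.mem_univ _)]
    congr 1
    simp
  · intro a _ b _ hab
    apply Finset.disjoint_left.2
    intro S hSa hSb
    rw [Finset.mem_powersetCard] at hSa hSb
    exact hab (hSa.2 ▸ hSb.2 ▸ rfl)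

end CardColB


open CardColB

/-- For `n ≥ 1` and `p ≥ 1`, the number of columns of type `B` and height
`p` over `𝔅_n` equals `∑_{k=0}^{⌊p/2⌋} C(2n+1, p−2k)`. -/
theorem card_columnB (n p : ℕ) (hn : 1 ≤ n) (hp : 1 ≤ p) :
    Nat.card {C : Fin p → BLetter n // IsColumnB n p C} =
      ∑ k ∈ Finset.range (p / 2 + 1), Nat.choose (2 * n + 1) (p - 2 * k) := by
  have key : Nat.card {C : Fin p → BLetter n // IsColumnB n p C}
      = Nat.card {S : Finset (BLetter n) // zlet n ∉ S ∧ S.card ≤ p} := by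
    apply Nat.card_eq_of_bijective
      (fun C => ⟨colT C.1, Finset.notMem_erase _ _, colT_card_le C.1⟩)
    constructor
    · rintro ⟨C₁, h1⟩ ⟨C₂, h2⟩ h
      exact Subtype.ext (col_inj h1 h2 (congrArg Subtype.val h))
    · rintro ⟨S, hz, hcard⟩
      exact ⟨⟨toCol S hcard, toCol_isColumn S hz hcard⟩,
        Subtype.ext (toCol_roundtrip S hz hcard hp)⟩
  rw [key, card_finsets, ← sum_choose_aux (2 * n) p]
end

section
/- Let n ≥ 1, p ≥ 1 and let k be an integer with 0 ≤ 2k ≤ p. The number of columns of type B and height p over the alphabet 𝔅_n that contain exactly 2k or exactly 2k+1 occurrences of the letter 0 equals binom(2n+1, p−2k). -/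
/-- The number of occurrences of the letter `0` (encoded as `n`) in the `p`-tuple `C`. -/
def zeroCount (n p : ℕ) (C : Fin p → BLetter n) : ℕ :=
  (Finset.univ.filter (fun j : Fin p => (C j : ℕ) = n)).card

/-- the letter `0`, encoded as `n`. -/
def zLet (n : ℕ) : BLetter n := ⟨n, by omega⟩

/-- the multiset of values of a tuple. -/
def colM {n p : ℕ} (C : Fin p → BLetter n) : Multiset (BLetter n) :=
  Finset.univ.val.map C

lemma count_colM {n p : ℕ} (C : Fin p → BLetter n) (x : BLetter n) :
    (colM C).count x = (Finset.univ.filter (fun j => x = C j)).card := by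
  rw [colM, Multiset.count_map, Finset.card_def, Finset.filter_val]

lemma card_colM {n p : ℕ} (C : Fin p → BLetter n) :
    Multiset.card (colM C) = p := by
  simp [colM]

lemma zc_eq_count {n p : ℕ} (C : Fin p → BLetter n) :
    zeroCount n p C = (colM C).count (zLet n) := by
  rw [count_colM, zeroCount]
  congr 1
  apply Finset.filter_congr
  intro j _
  constructor
  · intro h; exact Fin.ext (by simpa [zLet] using h.symm)
  · intro h; rw [← h]; rfl

lemma col_eq_imp {n p : ℕ} {C : Fin p → BLetter n} (hC : IsColumnB n p C)
    {i j : Fin p} (hij : i < j) (h : C i = C j) : C i = zLet n := by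
  have h1 : (i : ℕ) + 1 < p := lt_of_le_of_lt (Nat.succ_le_of_lt hij) j.isLt
  have h2 : C i ≤ C ⟨(i : ℕ) + 1, h1⟩ := hC.1 (by simp [Fin.le_def])
  have h3 : C ⟨(i : ℕ) + 1, h1⟩ ≤ C j := hC.1 (by simp [Fin.le_def]; omega)
  have h4 : C ⟨(i : ℕ), by omega⟩ = C ⟨(i : ℕ) + 1, h1⟩ := by
    have : C i = C ⟨(i : ℕ) + 1, h1⟩ := le_antisymm h2 (h ▸ h3)
    simpa using this
  have := hC.2 i h1 h4
  apply Fin.ext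
  simpa [zLet] using this

lemma count_le_one {n p : ℕ} {C : Fin p → BLetter n} (hC : IsColumnB n p C)
    {x : BLetter n} (hx : x ≠ zLet n) : (colM C).count x ≤ 1 := by
  rw [count_colM]
  apply Finset.card_le_one.2
  intro a ha b hb
  simp only [Finset.mem_filter] at ha hb
  by_contra hab
  rcases lt_or_gt_of_ne hab with h | h
  · exact hx (ha.2 ▸ col_eq_imp hC h (ha.2.symm.trans hb.2))
  · exact hx (hb.2 ▸ col_eq_imp hC h (hb.2.symm.trans ha.2))

lemma mem_colM_iff {n p : ℕ} (C : Fin p → BLetter n) (x : BLetter n) :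
    x ∈ colM C ↔ x ∈ Finset.univ.image C := by
  simp [colM, List.mem_ofFn, Set.mem_range, Finset.mem_image, eq_comm]

/-- central lemma: the multiset of values decomposes. -/
lemma colM_decomp {n p : ℕ} {C : Fin p → BLetter n} (hC : IsColumnB n p C) :
    colM C = ((Finset.univ.image C).erase (zLet n)).val
        + Multiset.replicate (zeroCount n p C) (zLet n) := by
  classical
  ext x
  rw [Multiset.count_add, Multiset.count_replicate]
  by_cases hx : x = zLet n
  · subst hx
    have h0 : Multiset.count (zLet n) ((Finset.univ.image C).erase (zLet n)).val = 0 :=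
      Multiset.count_eq_zero_of_notMem (Finset.notMem_erase (zLet n) (Finset.univ.image C))
    rw [h0, if_pos rfl, zero_add, zc_eq_count]
  · rw [if_neg (fun h => hx h.symm)]
    have herase : x ∈ (Finset.univ.image C).erase (zLet n) ↔ x ∈ Finset.univ.image C := by
      simp [Finset.mem_erase, hx]
    by_cases hmem : x ∈ Finset.univ.image C
    · rw [Multiset.count_eq_one_of_mem (Finset.nodup _) (herase.2 hmem)]
      have h1 : 1 ≤ (colM C).count x :=
        Multiset.one_le_count_iff_mem.2 ((mem_colM_iff C x).2 hmem)
      have h2 := count_le_one hC hx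
      omega
    · rw [Multiset.count_eq_zero_of_notMem (s := ((Finset.univ.image C).erase (zLet n)).val)
        (fun h => hmem (herase.1 h)),
        Multiset.count_eq_zero_of_notMem (fun h => hmem ((mem_colM_iff C x).1 h))]

lemma card_decomp {n p : ℕ} {C : Fin p → BLetter n} (hC : IsColumnB n p C) :
    p = ((Finset.univ.image C).erase (zLet n)).card + zeroCount n p C := by
  have := congrArg Multiset.card (colM_decomp hC)
  simpa [card_colM, Finset.card_def] using this

lemma col_unique {n p : ℕ} {C₁ C₂ : Fin p → BLetter n}
    (h1 : Monotone C₁) (h2 : Monotone C₂) (h : colM C₁ = colM C₂) : C₁ = C₂ := by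
  have h' : (List.ofFn C₁ : Multiset (BLetter n)) = List.ofFn C₂ := by
    simpa [colM, Fin.univ_val_map] using h
  exact List.ofFn_injective <| List.Perm.eq_of_sortedLE (List.sortedLE_ofFn_iff.2 h1)
    (List.sortedLE_ofFn_iff.2 h2) (Multiset.coe_eq_coe.1 h')

lemma build_column (n p : ℕ) (T : Finset (BLetter n)) (m : ℕ)
    (hT : zLet n ∉ T) (hcard : T.card + m = p) :
    ∃ C : Fin p → BLetter n, IsColumnB n p C ∧ zeroCount n p C = m ∧
      (Finset.univ.image C).erase (zLet n) = T := by
  classical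
  set M : Multiset (BLetter n) := T.val + Multiset.replicate m (zLet n) with hM
  set L : List (BLetter n) := M.sort (· ≤ ·) with hL
  have hlen : L.length = p := by
    rw [hL, Multiset.length_sort, hM, Multiset.card_add, Multiset.card_replicate,
      ← Finset.card_def]
    exact hcard
  set C : Fin p → BLetter n := fun j => L.get ⟨j, by rw [hlen]; exact j.isLt⟩ with hCdef
  have hofFn : List.ofFn C = L := by
    apply List.ext_get (by simp [hlen])
    intro i hi hi'
    rw [List.get_ofFn]
    rfl
  have hcolM : colM C = M := by
    rw [colM, Fin.univ_val_map, hofFn, hL, Multiset.sort_eq]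
  have hsorted : L.Pairwise (· ≤ ·) := Multiset.pairwise_sort _ _
  have hmono : Monotone C := by
    intro a b hab
    exact hsorted.rel_get_of_le (Fin.mk_le_mk.2 hab)
  have hcnt : ∀ x : BLetter n, x ≠ zLet n → (colM C).count x ≤ 1 := by
    intro x hx
    rw [hcolM, hM, Multiset.count_add, Multiset.count_replicate,
      if_neg (fun h => hx h.symm)]
    simpa using Multiset.nodup_iff_count_le_one.1 T.nodup x
  have hcol : IsColumnB n p C := by
    refine ⟨hmono, ?_⟩
    intro j hj heq
    by_contra hne
    have hxne : C ⟨j, by omega⟩ ≠ zLet n := fun h => hne (by rw [h]; rfl)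
    have h2 : 2 ≤ (colM C).count (C ⟨j, by omega⟩) := by
      rw [count_colM]
      have ha : (⟨j, by omega⟩ : Fin p) ∈
          Finset.univ.filter (fun i => C ⟨j, by omega⟩ = C i) := by simp
      have hb : (⟨j + 1, hj⟩ : Fin p) ∈
          Finset.univ.filter (fun i => C ⟨j, by omega⟩ = C i) := by simp [heq]
      have : ({⟨j, by omega⟩, ⟨j + 1, hj⟩} : Finset (Fin p)) ⊆
          Finset.univ.filter (fun i => C ⟨j, by omega⟩ = C i) := by
        intro x hx
        simp only [Finset.mem_insert, Finset.mem_singleton] at hx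
        rcases hx with rfl | rfl
        · exact ha
        · exact hb
      calc 2 = ({⟨j, by omega⟩, ⟨j + 1, hj⟩} : Finset (Fin p)).card := by
              rw [Finset.card_insert_of_notMem (by simp), Finset.card_singleton]
           _ ≤ _ := Finset.card_le_card this
    have := hcnt _ hxne
    omega
  have hzc : zeroCount n p C = m := by
    rw [zc_eq_count, hcolM, hM, Multiset.count_add, Multiset.count_replicate, if_pos rfl,
      Multiset.count_eq_zero_of_notMem hT, zero_add]
  refine ⟨C, hcol, hzc, ?_⟩
  have := colM_decomp hcol
  rw [hcolM, hzc, hM] at this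
  have := add_right_cancel this.symm
  exact Finset.val_injective this

/-- For `n ≥ 1`, `p ≥ 1` and `0 ≤ 2k ≤ p`, the number of columns of
type `B` and height `p` over `𝔅_n` containing exactly `2k` or exactly `2k+1` occurrences
of the letter `0` equals `C(2n+1, p−2k)`. -/
theorem card_columnB_with_zeros (n p k : ℕ) (hn : 1 ≤ n) (hp : 1 ≤ p) (hk : 2 * k ≤ p) :
    Nat.card {C : Fin p → BLetter n //
        IsColumnB n p C ∧ (zeroCount n p C = 2 * k ∨ zeroCount n p C = 2 * k + 1)} =
      Nat.choose (2 * n + 1) (p - 2 * k) := by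
  classical
  let f : {C : Fin p → BLetter n //
      IsColumnB n p C ∧ (zeroCount n p C = 2 * k ∨ zeroCount n p C = 2 * k + 1)} →
      {T : Finset (BLetter n) // T.card = p - 2 * k} := fun x =>
    if h : zeroCount n p x.1 = 2 * k then
      ⟨(Finset.univ.image x.1).erase (zLet n), by
        have := card_decomp x.2.1; omega⟩
    else
      ⟨insert (zLet n) ((Finset.univ.image x.1).erase (zLet n)), by
        have hzc : zeroCount n p x.1 = 2 * k + 1 := x.2.2.resolve_left h
        have := card_decomp x.2.1
        rw [Finset.card_insert_of_notMem (Finset.notMem_erase _ _)]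
        omega⟩
  have hbij : Function.Bijective f := by
    constructor
    · rintro ⟨C₁, hC₁, hz₁⟩ ⟨C₂, hC₂, hz₂⟩ hfeq
      rw [Subtype.ext_iff] at hfeq
      simp only [f] at hfeq
      have key : zeroCount n p C₁ = zeroCount n p C₂ ∧
          (Finset.univ.image C₁).erase (zLet n) = (Finset.univ.image C₂).erase (zLet n) := by
        split_ifs at hfeq with h1 h2 h2
        · exact ⟨h1.trans h2.symm, hfeq⟩
        · exfalso
          have : zLet n ∈ (Finset.univ.image C₁).erase (zLet n) := by
            rw [show (Finset.univ.image C₁).erase (zLet n) =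
              insert (zLet n) ((Finset.univ.image C₂).erase (zLet n)) from hfeq]
            exact Finset.mem_insert_self _ _
          exact Finset.notMem_erase _ _ this
        · exfalso
          have : zLet n ∈ (Finset.univ.image C₂).erase (zLet n) := by
            rw [show (Finset.univ.image C₂).erase (zLet n) =
              insert (zLet n) ((Finset.univ.image C₁).erase (zLet n)) from hfeq.symm]
            exact Finset.mem_insert_self _ _
          exact Finset.notMem_erase _ _ this
        · refine ⟨(hz₁.resolve_left h1).trans (hz₂.resolve_left h2).symm, ?_⟩
          have := congrArg (fun s => Finset.erase s (zLet n)) hfeq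
          simpa [Finset.erase_insert_of_ne, Finset.erase_insert,
            Finset.notMem_erase] using this
      have hcm : colM C₁ = colM C₂ := by
        rw [colM_decomp hC₁, colM_decomp hC₂, key.1, key.2]
      exact Subtype.ext (col_unique hC₁.1 hC₂.1 hcm)
    · rintro ⟨T, hT⟩
      by_cases hn0 : zLet n ∈ T
      · have hpos : 0 < p - 2 * k := hT ▸ Finset.card_pos.2 ⟨_, hn0⟩
        obtain ⟨C, hcol, hzc, herase⟩ := build_column n p (T.erase (zLet n)) (2 * k + 1)
          (Finset.notMem_erase _ _)
          (by rw [Finset.card_erase_of_mem hn0, hT]; omega)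
        refine ⟨⟨C, hcol, Or.inr hzc⟩, ?_⟩
        apply Subtype.ext
        have hv : (f ⟨C, hcol, Or.inr hzc⟩ : Finset (BLetter n)) =
            insert (zLet n) ((Finset.univ.image C).erase (zLet n)) :=
          congrArg Subtype.val (dif_neg (by rw [hzc]; omega))
        rw [hv, herase]
        exact Finset.insert_erase hn0
      · obtain ⟨C, hcol, hzc, herase⟩ := build_column n p T (2 * k) hn0
          (by omega)
        refine ⟨⟨C, hcol, Or.inl hzc⟩, ?_⟩
        apply Subtype.ext
        have hv : (f ⟨C, hcol, Or.inl hzc⟩ : Finset (BLetter n)) =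
            (Finset.univ.image C).erase (zLet n) :=
          congrArg Subtype.val (dif_pos hzc)
        rw [hv]
        exact herase
  rw [Nat.card_eq_of_bijective f hbij, Nat.card_eq_fintype_card,
    Fintype.card_finset_len, Fintype.card_fin]
end

section
/- Let n ≥ 2, p ≥ 1 and i ∈ {1,…,n}. For every column C of type D and height p, the word f̃_i(w(C)), if it is not the null symbol, is the reading of a column of type D and height p; likewise, the word ẽ_i(w(C)), if it is not the null symbol, is the reading of a column of type D and height p. -/
/-- The alphabet `𝒟_n = {1 ≺ ⋯ ≺ n−1 ≺ n, n̄ ≺ \overline{n−1} ≺ ⋯ ≺ 1̄}` with `2n`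
letters, encoded as `Fin (2n)`: the letter `j` (`1 ≤ j ≤ n`) is `j−1`, the letter `n̄` is
`n`, and the barred letter `j̄` (`1 ≤ j ≤ n−1`) is `2n−j`.  The letters encoded by `n−1`
(that is `n`) and `n` (that is `n̄`) are incomparable. -/
abbrev DLetter (n : ℕ) := Fin (2 * n)

/-- The strict order of `𝒟_n`: index order except that `n` and `n̄` (indices `n−1` and
`n`) are incomparable. -/
def dLT (n : ℕ) (a b : DLetter n) : Prop :=
  (a : ℕ) < (b : ℕ) ∧ ¬((a : ℕ) = n - 1 ∧ (b : ℕ) = n)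

/-- The Kashiwara operator `f̃_i` on a single letter of `𝒟_n`, following the crystal
graph of the vector representation of type `D_n`: for `i ≤ n−1`, `i ↦ i+1` and
`\overline{i+1} ↦ ī`; for `i = n`, `n−1 ↦ n̄` and `n ↦ \overline{n−1}`; all other letters
are sent to the null symbol `none`. -/
def fLetterD (n i : ℕ) (x : DLetter n) : Option (DLetter n) :=
  if i < n then
    if h : ((x : ℕ) + 1 = i ∨ (x : ℕ) + 1 + i = 2 * n) ∧ (x : ℕ) + 1 < 2 * n then
      some ⟨(x : ℕ) + 1, h.2⟩
    else none
  else if i = n then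
    if h1 : (x : ℕ) + 2 = n ∧ n < 2 * n then some ⟨n, h1.2⟩
    else if h2 : (x : ℕ) + 1 = n ∧ n + 1 < 2 * n then some ⟨n + 1, h2.2⟩
    else none
  else none

/-- The Kashiwara operator `ẽ_i` on a single letter of `𝒟_n`: the reverse of `f̃_i`. -/
def eLetterD (n i : ℕ) (y : DLetter n) : Option (DLetter n) :=
  if i < n then
    if ((y : ℕ) = i ∨ (y : ℕ) + i = 2 * n) ∧ 1 ≤ (y : ℕ) then
      some ⟨(y : ℕ) - 1, lt_of_le_of_lt (Nat.sub_le _ _) y.isLt⟩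
    else none
  else if i = n then
    if h1 : (y : ℕ) = n ∧ n - 2 < 2 * n ∧ 2 ≤ n then some ⟨n - 2, h1.2.1⟩
    else if h2 : (y : ℕ) = n + 1 ∧ n - 1 < 2 * n ∧ 1 ≤ n then some ⟨n - 1, h2.2.1⟩
    else none
  else none

/-- Iteration of a partially defined operator (`none` is the null symbol, and any
expression involving the null symbol is null). -/
def oiter {α : Type*} (g : α → Option α) : ℕ → α → Option α
  | 0, a => some a
  | m + 1, a => (g a).bind (oiter g m)

/-- `φ` of a partially defined operator at a point: the maximal number of times the
operator can be applied without producing the null symbol. -/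
noncomputable def phiOf {α : Type*} (g : α → Option α) (a : α) : ℕ :=
  sSup {m | oiter g m a ≠ none}

/-- `ε_i` of a single letter: the maximal power of `ẽ_i` not giving the null symbol. -/
noncomputable def epsLetterD (n i : ℕ) (x : DLetter n) : ℕ :=
  phiOf (eLetterD n i) x

/-- One step of the recursive (tensor-rule) definition of `f̃_i` on words.  Words are
stored in *reversed* order, so that a word `w = u·v` (`v` its last letter) is the list
`v :: uᵣ` with `uᵣ` the reversal of `u`; `prev` is `f̃_i` (in reversed encoding) on the
strictly shorter word `u`.  The rule: `f̃_i(u ⊗ v) = f̃_i(u) ⊗ v` if `φ_i(u) > ε_i(v)`,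
and `u ⊗ f̃_i(v)` otherwise. -/
noncomputable def fStepD (n i : ℕ) (prev : List (DLetter n) → Option (List (DLetter n))) :
    List (DLetter n) → Option (List (DLetter n))
  | [] => none
  | [x] => (fLetterD n i x).map (fun y => [y])
  | v :: u =>
      if phiOf prev u > epsLetterD n i v then (prev u).map (fun u' => v :: u')
      else (fLetterD n i v).map (fun y => y :: u)

/-- Fuel-indexed `f̃_i` on reversed words (the fuel bounds the length of the word). -/
noncomputable def fAuxD (n i : ℕ) : ℕ → List (DLetter n) → Option (List (DLetter n))
  | 0 => fun w => match w with
      | [x] => (fLetterD n i x).map (fun y => [y])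
      | _ => none
  | m + 1 => fStepD n i (fAuxD n i m)

/-- One step of the recursive (tensor-rule) definition of `ẽ_i` on reversed words:
`ẽ_i(u ⊗ v) = u ⊗ ẽ_i(v)` if `φ_i(u) < ε_i(v)`, and `ẽ_i(u) ⊗ v` otherwise. -/
noncomputable def eStepD (n i : ℕ)
    (prevF prevE : List (DLetter n) → Option (List (DLetter n))) :
    List (DLetter n) → Option (List (DLetter n))
  | [] => none
  | [x] => (eLetterD n i x).map (fun y => [y])
  | v :: u =>
      if phiOf prevF u < epsLetterD n i v then (eLetterD n i v).map (fun y => y :: u)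
      else (prevE u).map (fun u' => v :: u')

/-- Fuel-indexed `ẽ_i` on reversed words. -/
noncomputable def eAuxD (n i : ℕ) : ℕ → List (DLetter n) → Option (List (DLetter n))
  | 0 => fun w => match w with
      | [x] => (eLetterD n i x).map (fun y => [y])
      | _ => none
  | m + 1 => eStepD n i (fAuxD n i m) (eAuxD n i m)

/-- The Kashiwara operator `f̃_i` on words over `𝒟_n` (lists read left to right),
the value `none` being the null symbol. -/
noncomputable def fWordD (n i : ℕ) (w : List (DLetter n)) : Option (List (DLetter n)) :=
  (fAuxD n i w.length w.reverse).map List.reverse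

/-- The Kashiwara operator `ẽ_i` on words over `𝒟_n`. -/
noncomputable def eWordD (n i : ℕ) (w : List (DLetter n)) : Option (List (DLetter n)) :=
  (eAuxD n i w.length w.reverse).map List.reverse

/-- The reading of a column of type `D`: a word `x₁⋯x_p` over `𝒟_n` with `x_{j+1}` never
less than or equal to `x_j` (for the partial order of `𝒟_n`). -/
def IsColWordD (n : ℕ) (w : List (DLetter n)) : Prop :=
  List.Chain' (fun a b => ¬(b = a ∨ dLT n b a)) w

namespace KD
variable {n i : ℕ}

lemma fLetter_spec {x y : DLetter n} (hx : fLetterD n i x = some y) :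
    (i < n ∧ ((x:ℕ)+1 = i ∨ (x:ℕ)+1+i = 2*n) ∧ (y:ℕ) = (x:ℕ)+1) ∨
    (i = n ∧ (((x:ℕ)+2 = n ∧ (y:ℕ) = n) ∨ ((x:ℕ)+1 = n ∧ (y:ℕ) = n+1))) := by
  unfold fLetterD at hx
  split_ifs at hx <;> simp_all [Fin.ext_iff] <;> omega

lemma eLetter_spec {x y : DLetter n} (hx : eLetterD n i x = some y) :
    (i < n ∧ ((x:ℕ) = i ∨ (x:ℕ)+i = 2*n) ∧ 1 ≤ (x:ℕ) ∧ (y:ℕ) = (x:ℕ)-1) ∨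
    (i = n ∧ (((x:ℕ) = n ∧ (y:ℕ) = n-2) ∨ ((x:ℕ) = n+1 ∧ (y:ℕ) = n-1))) := by
  unfold eLetterD at hx
  split_ifs at hx <;> simp_all [Fin.ext_iff] <;> omega

lemma fLetter_none_iff (hn : 2 ≤ n) (hi : 1 ≤ i) (hin : i ≤ n) {x : DLetter n} :
    fLetterD n i x = none ↔
      ¬((i < n ∧ ((x:ℕ)+1 = i ∨ (x:ℕ)+1+i = 2*n)) ∨
        (i = n ∧ ((x:ℕ)+2 = n ∨ (x:ℕ)+1 = n))) := by
  have := x.isLt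
  unfold fLetterD
  split_ifs <;> simp_all <;> omega

lemma eLetter_none_iff (hn : 2 ≤ n) (hi : 1 ≤ i) (hin : i ≤ n) {x : DLetter n} :
    eLetterD n i x = none ↔
      ¬((i < n ∧ ((x:ℕ) = i ∨ (x:ℕ)+i = 2*n)) ∨
        (i = n ∧ ((x:ℕ) = n ∨ (x:ℕ) = n+1))) := by
  have := x.isLt
  unfold eLetterD
  split_ifs <;> simp_all <;> omega

lemma ff_none (hn : 2 ≤ n) (hi : 1 ≤ i) (hin : i ≤ n) {x y : DLetter n}
    (h : fLetterD n i x = some y) : fLetterD n i y = none := by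
  rcases fLetter_spec h with ⟨h1, h2, h3⟩ | ⟨h1, h2⟩ <;>
    rw [fLetter_none_iff hn hi hin] <;> omega

lemma fe_none (hn : 2 ≤ n) (hi : 1 ≤ i) (hin : i ≤ n) {x y : DLetter n}
    (h : fLetterD n i x = some y) : eLetterD n i x = none := by
  rcases fLetter_spec h with ⟨h1, h2, h3⟩ | ⟨h1, h2⟩ <;>
    rw [eLetter_none_iff hn hi hin] <;> omega

lemma ee_none (hn : 2 ≤ n) (hi : 1 ≤ i) (hin : i ≤ n) {x y : DLetter n}
    (h : eLetterD n i x = some y) : eLetterD n i y = none := by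
  rcases eLetter_spec h with ⟨h1, h2, h3, h4⟩ | ⟨h1, h2⟩ <;>
    rw [eLetter_none_iff hn hi hin] <;> omega

lemma fLetter_lt {x y : DLetter n} (h : fLetterD n i x = some y) : (x:ℕ) < (y:ℕ) := by
  rcases fLetter_spec h with ⟨h1, h2, h3⟩ | ⟨h1, h2⟩ <;> omega

end KD

namespace KD
variable {α : Type*} {g : α → Option α}

lemma oiter_succ (g : α → Option α) {a b : α} (h : g a = some b) (k : ℕ) :
    oiter g (k+1) a = oiter g k b := by simp [oiter, h]

lemma oiter_none {a : α} (h : g a = none) (k : ℕ) : oiter g (k+1) a = none := by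
  simp [oiter, h]

lemma phiOf_none {a : α} (h : g a = none) : phiOf g a = 0 := by
  have : {m | oiter g m a ≠ none} = {0} := by
    ext m
    cases m with
    | zero => simp [oiter]
    | succ k => simp [oiter_none h]
  rw [phiOf, this, csSup_singleton]

lemma zero_mem_phi (g : α → Option α) (a : α) : 0 ∈ {m | oiter g m a ≠ none} := by
  simp [oiter]

lemma phiOf_succ {a b : α} (h : g a = some b)
    (hb : BddAbove {k | oiter g k b ≠ none}) : phiOf g a = phiOf g b + 1 := by
  have h0 : (0:ℕ) ∈ {k | oiter g k b ≠ none} := zero_mem_phi g b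
  have hmem : sSup {k | oiter g k b ≠ none} ∈ {k | oiter g k b ≠ none} :=
    Nat.sSup_mem ⟨0, h0⟩ hb
  have hub : ∀ k ∈ {k | oiter g k a ≠ none}, k ≤ phiOf g b + 1 := by
    intro k hk
    cases k with
    | zero => omega
    | succ m =>
      rw [Set.mem_setOf_eq, oiter_succ g h] at hk
      exact Nat.succ_le_succ (le_csSup hb hk)
  apply le_antisymm
  · exact csSup_le ⟨0, zero_mem_phi g a⟩ hub
  · apply le_csSup ⟨phiOf g b + 1, hub⟩
    show oiter g (sSup {k | oiter g k b ≠ none} + 1) a ≠ none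
    rw [oiter_succ g h]
    exact hmem

lemma phiOf_pos {a : α} (ha : BddAbove {k | oiter g k a ≠ none})
    (h : g a ≠ none) : 1 ≤ phiOf g a := by
  apply le_csSup ha
  show oiter g 1 a ≠ none
  obtain ⟨b, hb⟩ := Option.ne_none_iff_exists'.mp h
  simp [oiter, hb]

lemma phiOf_eq_zero_iff {a : α} (ha : BddAbove {k | oiter g k a ≠ none}) :
    phiOf g a = 0 ↔ g a = none := by
  constructor
  · intro h
    by_contra hne
    have := phiOf_pos ha hne
    omega
  · exact phiOf_none

lemma bdd_of_double_none (hg : ∀ a b, g a = some b → g b = none) (a : α) :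
    BddAbove {k | oiter g k a ≠ none} := by
  refine ⟨1, fun k hk => ?_⟩
  by_contra hlt
  push_neg at hlt
  obtain ⟨m, rfl⟩ : ∃ m, k = m + 2 := ⟨k - 2, by omega⟩
  rw [Set.mem_setOf_eq] at hk
  apply hk
  cases hga : g a with
  | none => exact oiter_none hga _
  | some b =>
    rw [oiter_succ g hga]
    exact oiter_none (hg a b hga) _
end KD

namespace KD
variable {n i : ℕ}

lemma eps_eq_zero (h : eLetterD n i x = none) : epsLetterD n i x = 0 := phiOf_none h

lemma eps_eq_one (hn : 2 ≤ n) (hi : 1 ≤ i) (hin : i ≤ n) {x y : DLetter n}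
    (h : eLetterD n i x = some y) : epsLetterD n i x = 1 := by
  have hb : BddAbove {k | oiter (eLetterD n i) k y ≠ none} :=
    bdd_of_double_none (fun a b hab => ee_none hn hi hin hab) y
  rw [epsLetterD, phiOf_succ h hb]
  rw [show phiOf (eLetterD n i) y = 0 from phiOf_none (ee_none hn hi hin h)]

lemma eps_le_one (hn : 2 ≤ n) (hi : 1 ≤ i) (hin : i ≤ n) (x : DLetter n) :
    epsLetterD n i x ≤ 1 := by
  cases h : eLetterD n i x with
  | none => rw [show epsLetterD n i x = 0 from phiOf_none h]; omega
  | some y => rw [eps_eq_one hn hi hin h]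

def sumIdx {n : ℕ} (l : List (DLetter n)) : ℕ := (l.map Fin.val).sum

lemma sumIdx_cons {x : DLetter n} {u : List (DLetter n)} :
    sumIdx (x :: u) = (x:ℕ) + sumIdx u := by simp [sumIdx]

lemma sumIdx_le (l : List (DLetter n)) : sumIdx l ≤ 2 * n * l.length := by
  induction l with
  | nil => simp [sumIdx]
  | cons x u ih =>
    have := x.isLt
    rw [sumIdx_cons]
    simp only [List.length_cons]
    nlinarith

lemma fAux_single (m : ℕ) (x : DLetter n) :
    fAuxD n i m [x] = (fLetterD n i x).map (fun y => [y]) := by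
  cases m <;> rfl

lemma eAux_single (m : ℕ) (x : DLetter n) :
    eAuxD n i m [x] = (eLetterD n i x).map (fun y => [y]) := by
  cases m <;> rfl

lemma fAux_cons (m : ℕ) (x z : DLetter n) (u : List (DLetter n)) :
    fAuxD n i (m+1) (x :: z :: u) =
      if phiOf (fAuxD n i m) (z :: u) > epsLetterD n i x then
        ((fAuxD n i m) (z :: u)).map (fun u' => x :: u')
      else (fLetterD n i x).map (fun y => y :: z :: u) := by
  rfl

lemma eAux_cons (m : ℕ) (x z : DLetter n) (u : List (DLetter n)) :
    eAuxD n i (m+1) (x :: z :: u) =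
      if phiOf (fAuxD n i m) (z :: u) < epsLetterD n i x then
        (eLetterD n i x).map (fun y => y :: z :: u)
      else ((eAuxD n i m) (z :: u)).map (fun u' => x :: u') := by
  rfl

lemma fAux_len_sum : ∀ (m : ℕ) (l l' : List (DLetter n)),
    fAuxD n i m l = some l' → l'.length = l.length ∧ sumIdx l < sumIdx l' := by
  intro m
  induction m with
  | zero =>
    intro l l' h
    match l with
    | [x] =>
      rw [fAux_single, Option.map_eq_some_iff] at h
      obtain ⟨y, hy, rfl⟩ := h
      exact ⟨rfl, by simpa [sumIdx] using fLetter_lt hy⟩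
    | [] => exact absurd h (by simp [fAuxD])
    | x :: z :: u => exact absurd h (by simp [fAuxD])
  | succ m ih =>
    intro l l' h
    match l with
    | [] => exact absurd h (by simp [fAuxD, fStepD])
    | [x] =>
      rw [fAux_single, Option.map_eq_some_iff] at h
      obtain ⟨y, hy, rfl⟩ := h
      exact ⟨rfl, by simpa [sumIdx] using fLetter_lt hy⟩
    | x :: z :: u =>
      rw [fAux_cons] at h
      split_ifs at h
      · rw [Option.map_eq_some_iff] at h
        obtain ⟨u', hu, rfl⟩ := h
        obtain ⟨h1, h2⟩ := ih _ _ hu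
        constructor
        · simp [h1]
        · simp only [sumIdx_cons] at h2 ⊢; omega
      · rw [Option.map_eq_some_iff] at h
        obtain ⟨y, hy, rfl⟩ := h
        have := fLetter_lt hy
        constructor
        · simp
        · simp only [sumIdx_cons]; omega

lemma oiter_fAux_bound (m : ℕ) : ∀ (k : ℕ) (l z : List (DLetter n)),
    oiter (fAuxD n i m) k l = some z → z.length = l.length ∧ sumIdx l + k ≤ sumIdx z := by
  intro k
  induction k with
  | zero => intro l z h; rw [oiter] at h; rw [Option.some_inj] at h; subst h; omega
  | succ k ih =>
    intro l z h
    rw [oiter] at h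
    cases hl : fAuxD n i m l with
    | none => rw [hl] at h; simp at h
    | some l₁ =>
      rw [hl] at h
      simp only [Option.bind_some] at h
      obtain ⟨h1, h2⟩ := fAux_len_sum m l l₁ hl
      obtain ⟨h3, h4⟩ := ih l₁ z h
      exact ⟨by omega, by omega⟩

lemma bdd_fAux (m : ℕ) (l : List (DLetter n)) :
    BddAbove {k | oiter (fAuxD n i m) k l ≠ none} := by
  refine ⟨2 * n * l.length, fun k hk => ?_⟩
  rw [Set.mem_setOf_eq] at hk
  obtain ⟨z, hz⟩ := Option.ne_none_iff_exists'.mp hk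
  obtain ⟨h1, h2⟩ := oiter_fAux_bound m k l z hz
  have := sumIdx_le z
  rw [h1] at this
  omega

noncomputable def Phi (n i : ℕ) (l : List (DLetter n)) : ℕ := phiOf (fAuxD n i l.length) l

lemma phi_word_succ {l l' : List (DLetter n)} (h : fAuxD n i l.length l = some l') :
    Phi n i l = Phi n i l' + 1 := by
  have hlen := (fAux_len_sum _ _ _ h).1
  rw [Phi, phiOf_succ h (bdd_fAux _ _), Phi, hlen]

lemma phi_word_zero_iff (l : List (DLetter n)) :
    Phi n i l = 0 ↔ fAuxD n i l.length l = none :=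
  phiOf_eq_zero_iff (bdd_fAux _ _)

lemma phi_pos_head {x y : DLetter n} {u : List (DLetter n)}
    (hx : fLetterD n i x = some y) : fAuxD n i (x :: u).length (x :: u) ≠ none := by
  match u with
  | [] => rw [fAux_single, hx]; simp
  | z :: u₀ =>
    rw [show (x :: z :: u₀).length = (z :: u₀).length + 1 from rfl, fAux_cons]
    split_ifs with hg
    · cases hA : fAuxD n i (z :: u₀).length (z :: u₀) with
      | none =>
        have h0 : Phi n i (z :: u₀) = 0 := (phi_word_zero_iff _).mpr hA
        rw [Phi] at h0; omega
      | some u' => simp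
    · rw [hx]; simp

lemma phi_pos_head' {x y : DLetter n} {u : List (DLetter n)}
    (hx : fLetterD n i x = some y) : 1 ≤ Phi n i (x :: u) := by
  have h1 := phi_pos_head (u := u) hx
  have h2 : ¬ (Phi n i (x :: u) = 0) := fun h0 => h1 ((phi_word_zero_iff _).mp h0)
  omega

def Qr (n : ℕ) (a b : DLetter n) : Prop := ¬(a = b ∨ dLT n a b)

lemma Qr_iff (hn : 2 ≤ n) {a b : DLetter n} :
    Qr n a b ↔ ((b:ℕ) < (a:ℕ) ∨ ((a:ℕ) = n - 1 ∧ (b:ℕ) = n)) := by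
  rw [Qr, dLT, Fin.ext_iff]
  constructor
  · intro h; omega
  · intro h; omega

lemma claim_F1 (hn : 2 ≤ n) (hi : 1 ≤ i) (hin : i ≤ n) {x z z' : DLetter n} (hq : Qr n x z) (he : eLetterD n i x = none)
    (hf : fLetterD n i z = some z') : Qr n x z' := by
  rw [Qr_iff hn] at hq ⊢
  rw [eLetter_none_iff hn hi hin] at he
  have h1 := fLetter_spec hf
  have := x.isLt
  omega

lemma claim_F2 (hn : 2 ≤ n) (hi : 1 ≤ i) (hin : i ≤ n) {x z y : DLetter n} (hq : Qr n x z) (hf : fLetterD n i x = some y) :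
    Qr n y z := by
  rw [Qr_iff hn] at hq ⊢
  have h1 := fLetter_spec hf
  have := z.isLt
  omega

lemma claim_E1 (hn : 2 ≤ n) (hi : 1 ≤ i) (hin : i ≤ n) {x z z' : DLetter n} (hq : Qr n x z) (he : eLetterD n i z = some z') :
    Qr n x z' := by
  rw [Qr_iff hn] at hq ⊢
  have h1 := eLetter_spec he
  have := x.isLt
  omega

lemma claim_E2 (hn : 2 ≤ n) (hi : 1 ≤ i) (hin : i ≤ n) {x z x' : DLetter n} (hq : Qr n x z) (hf : fLetterD n i z = none)
    (he : eLetterD n i x = some x') : Qr n x' z := by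
  rw [Qr_iff hn] at hq ⊢
  rw [fLetter_none_iff hn hi hin] at hf
  have h1 := eLetter_spec he
  have := z.isLt
  omega

lemma eps_zero_none (hn : 2 ≤ n) (hi : 1 ≤ i) (hin : i ≤ n) {x : DLetter n}
    (h : epsLetterD n i x = 0) : eLetterD n i x = none := by
  cases he : eLetterD n i x with
  | none => rfl
  | some y => rw [eps_eq_one hn hi hin he] at h; omega

lemma main_f (hn : 2 ≤ n) (hi : 1 ≤ i) (hin : i ≤ n) :
    ∀ (u : List (DLetter n)) (x : DLetter n) (l' : List (DLetter n)),
      fAuxD n i (x :: u).length (x :: u) = some l' → List.Chain' (Qr n) (x :: u) →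
      ∃ x' u', l' = x' :: u' ∧ List.Chain' (Qr n) (x' :: u') ∧ u'.length = u.length ∧
        (x' = x ∨ (fLetterD n i x = some x' ∧ Phi n i (x :: u) ≤ 1)) := by
  intro u
  induction u with
  | nil =>
    intro x l' h _
    rw [fAux_single, Option.map_eq_some_iff] at h
    obtain ⟨y, hy, rfl⟩ := h
    refine ⟨y, [], rfl, List.isChain_singleton y, rfl, Or.inr ⟨hy, ?_⟩⟩
    have h1 : fAuxD n i ([x] : List (DLetter n)).length [x] = some [y] := by
      rw [fAux_single, hy]; rfl
    have h2 : Phi n i [y] = 0 := by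
      rw [phi_word_zero_iff, fAux_single, ff_none hn hi hin hy]; rfl
    rw [phi_word_succ h1, h2]
  | cons z u₀ ih =>
    intro x l' h hc
    rw [show (x :: z :: u₀).length = (z :: u₀).length + 1 from rfl, fAux_cons] at h
    unfold List.Chain' at hc
    rw [List.isChain_cons_cons] at hc
    obtain ⟨hq, hc⟩ := hc
    split_ifs at h with hg
    · -- f acts on the inner part
      rw [Option.map_eq_some_iff] at h
      obtain ⟨u₂, hu₂, rfl⟩ := h
      obtain ⟨z', u₀', rfl, hch, hlen, hd⟩ := ih z u₂ hu₂ hc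
      have hqz : Qr n x z' := by
        rcases hd with rfl | ⟨hfz, hle⟩
        · exact hq
        · -- the head of the inner part moved; use the guard
          have hg' : Phi n i (z :: u₀) > epsLetterD n i x := hg
          have heps : epsLetterD n i x = 0 := by omega
          exact claim_F1 hn hi hin hq (eps_zero_none hn hi hin heps) hfz
      exact ⟨x, z' :: u₀', rfl, List.isChain_cons_cons.mpr ⟨hqz, hch⟩, by simp [hlen],
        Or.inl rfl⟩
    · -- f acts on the head letter x
      rw [Option.map_eq_some_iff] at h
      obtain ⟨y, hy, rfl⟩ := h
      have heps : epsLetterD n i x = 0 := eps_eq_zero (fe_none hn hi hin hy)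
      have hphi0 : Phi n i (z :: u₀) = 0 := by
        have hg' : ¬ (Phi n i (z :: u₀) > epsLetterD n i x) := hg
        omega
      refine ⟨y, z :: u₀, rfl, List.isChain_cons_cons.mpr ⟨claim_F2 hn hi hin hq hy, hc⟩,
        rfl, Or.inr ⟨hy, ?_⟩⟩
      have hsome : fAuxD n i (x :: z :: u₀).length (x :: z :: u₀) = some (y :: z :: u₀) := by
        rw [show (x :: z :: u₀).length = (z :: u₀).length + 1 from rfl, fAux_cons,
          if_neg hg, hy]
        rfl
      have hz : Phi n i (y :: z :: u₀) = 0 := by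
        rw [phi_word_zero_iff,
          show (y :: z :: u₀).length = (z :: u₀).length + 1 from rfl, fAux_cons]
        split_ifs with hg2
        · exfalso
          have hg2' : Phi n i (z :: u₀) > epsLetterD n i y := hg2
          omega
        · rw [ff_none hn hi hin hy]; rfl
      rw [phi_word_succ hsome, hz]

lemma main_e (hn : 2 ≤ n) (hi : 1 ≤ i) (hin : i ≤ n) :
    ∀ (u : List (DLetter n)) (x : DLetter n) (l' : List (DLetter n)),
      eAuxD n i (x :: u).length (x :: u) = some l' → List.Chain' (Qr n) (x :: u) →
      ∃ x' u', l' = x' :: u' ∧ List.Chain' (Qr n) (x' :: u') ∧ u'.length = u.length ∧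
        (x' = x ∨ eLetterD n i x = some x') := by
  intro u
  induction u with
  | nil =>
    intro x l' h _
    rw [eAux_single, Option.map_eq_some_iff] at h
    obtain ⟨y, hy, rfl⟩ := h
    exact ⟨y, [], rfl, List.isChain_singleton y, rfl, Or.inr hy⟩
  | cons z u₀ ih =>
    intro x l' h hc
    rw [show (x :: z :: u₀).length = (z :: u₀).length + 1 from rfl, eAux_cons] at h
    unfold List.Chain' at hc
    rw [List.isChain_cons_cons] at hc
    obtain ⟨hq, hc⟩ := hc
    split_ifs at h with hg
    · -- e acts on the head letter x
      rw [Option.map_eq_some_iff] at h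
      obtain ⟨y, hy, rfl⟩ := h
      have hg' : Phi n i (z :: u₀) < epsLetterD n i x := hg
      have heps := eps_le_one hn hi hin x
      have hphi0 : Phi n i (z :: u₀) = 0 := by omega
      have hfz : fLetterD n i z = none := by
        cases hfz : fLetterD n i z with
        | none => rfl
        | some y' =>
          have := phi_pos_head' (u := u₀) hfz
          omega
      exact ⟨y, z :: u₀, rfl,
        List.isChain_cons_cons.mpr ⟨claim_E2 hn hi hin hq hfz hy, hc⟩, rfl, Or.inr hy⟩
    · -- e acts on the inner part
      rw [Option.map_eq_some_iff] at h
      obtain ⟨u₂, hu₂, rfl⟩ := h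
      obtain ⟨z', u₀', rfl, hch, hlen, hd⟩ := ih z u₂ hu₂ hc
      have hqz : Qr n x z' := by
        rcases hd with rfl | he'
        · exact hq
        · exact claim_E1 hn hi hin hq he'
      exact ⟨x, z' :: u₀', rfl, List.isChain_cons_cons.mpr ⟨hqz, hch⟩, by simp [hlen],
        Or.inl rfl⟩
end KD

/-- For `n ≥ 2`, `p ≥ 1` and `1 ≤ i ≤ n`, if `w` is the reading of a
column of type `D` and height `p`, then `f̃_i(w)`, if not null, is again the reading of a
column of type `D` and height `p`, and likewise for `ẽ_i(w)`. -/


theorem kashiwara_preserves_columnsD (n p i : ℕ) (hn : 2 ≤ n) (hp : 1 ≤ p)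
    (hi : 1 ≤ i) (hin : i ≤ n) (w : List (DLetter n))
    (hw : IsColWordD n w) (hlen : w.length = p) :
    (∀ w', fWordD n i w = some w' → IsColWordD n w' ∧ w'.length = p) ∧
    (∀ w', eWordD n i w = some w' → IsColWordD n w' ∧ w'.length = p) := by
  have hrev : List.Chain' (KD.Qr n) w.reverse := by
    unfold List.Chain'
    rw [List.isChain_reverse]
    exact hw
  obtain ⟨x, u, hr⟩ : ∃ x u, w.reverse = x :: u := by
    cases hrw : w.reverse with
    | nil =>
      exfalso
      have : w = [] := by simpa using congrArg List.reverse hrw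
      rw [this] at hlen
      simp at hlen
      omega
    | cons x u => exact ⟨x, u, rfl⟩
  constructor
  · intro w' hw'
    rw [fWordD, Option.map_eq_some_iff] at hw'
    obtain ⟨r, hr', rfl⟩ := hw'
    have hfu : fAuxD n i (x :: u).length (x :: u) = some r := by
      rw [← hr, List.length_reverse]
      exact hr'
    obtain ⟨x', u', rfl, hch, hlen', -⟩ :=
      KD.main_f hn hi hin u x r hfu (hr ▸ hrev)
    constructor
    · show List.Chain' _ _
      unfold List.Chain'
      rw [List.isChain_reverse]
      exact hch
    · have h1 : w.reverse.length = p := by rw [List.length_reverse, hlen]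
      rw [hr] at h1
      simp only [List.length_reverse, List.length_cons] at *
      omega
  · intro w' hw'
    rw [eWordD, Option.map_eq_some_iff] at hw'
    obtain ⟨r, hr', rfl⟩ := hw'
    have hfu : eAuxD n i (x :: u).length (x :: u) = some r := by
      rw [← hr, List.length_reverse]
      exact hr'
    obtain ⟨x', u', rfl, hch, hlen', -⟩ :=
      KD.main_e hn hi hin u x r hfu (hr ▸ hrev)
    constructor
    · show List.Chain' _ _
      unfold List.Chain'
      rw [List.isChain_reverse]
      exact hch
    · have h1 : w.reverse.length = p := by rw [List.length_reverse, hlen]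
      rw [hr] at h1
      simp only [List.length_reverse, List.length_cons] at *
      omega
end
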